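/- Let M ≥ 2 and let π : ℝ^M → ℝ^{M−1} be the projection π(x_1, …, x_M) = (x_1, …, x_{M−1}). Let S ⊂ ℝ^{M−1} be a nondegenerate (M−1)-simplex with vertices v_1, …, v_M and let η > 0. There exists ω > 0 such that for every σ > 0 the following holds: if ψ is a Lipschitz function with Lipschitz constant ≤ ω defined on a neighbourhood of σS, if w_j = (σv_j, ψ(σv_j)) ∈ ℝ^M for 1 ≤ j ≤ M, if Π is the hyperplane in ℝ^M containing w_1, …, w_M, and if Γ ⊂ Π is the circumsphere in Π of the (M−1)-simplex with vertices w_1, …, w_M, then π(Γ) is contained in the (ση)-neighbourhood of the circumsphere of the simplex σS in ℝ^{M−1}. -/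

import Mathlib

open scoped RealInnerProductSpace

/-- The projection `π : ℝ^M → ℝ^(M-1)`, `π (x_1, …, x_M) = (x_1, …, x_{M-1})`. -/
def projR (M : ℕ) (x : EuclideanSpace ℝ (Fin M)) : EuclideanSpace ℝ (Fin (M - 1)) :=
  WithLp.toLp 2 (fun i => x (Fin.castLE (Nat.sub_le M 1) i))

/-- projR as a linear map, for `M = m+1`. -/
def projL (m : ℕ) : EuclideanSpace ℝ (Fin (m+1)) →ₗ[ℝ] EuclideanSpace ℝ (Fin m) where
  toFun := projR (m+1)
  map_add' := fun _ _ => rfl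
  map_smul' := fun _ _ => rfl

def lastL (m : ℕ) : EuclideanSpace ℝ (Fin (m+1)) →ₗ[ℝ] ℝ where
  toFun := fun x => x (Fin.last m)
  map_add' := fun _ _ => rfl
  map_smul' := fun _ _ => rfl

lemma pyth (m : ℕ) (q : EuclideanSpace ℝ (Fin (m+1))) :
    ‖q‖^2 = ‖projR (m+1) q‖^2 + (q (Fin.last m))^2 := by
  rw [PiLp.norm_sq_eq_of_L2, PiLp.norm_sq_eq_of_L2, Fin.sum_univ_castSucc]
  simp [projR, Real.norm_eq_abs, sq_abs]
  rfl

lemma key_inner {E : Type*} [NormedAddCommGroup E] [InnerProductSpace ℝ E]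
    (A B p c : E) (α β : ℝ)
    (h1 : ‖A - p‖^2 + α = ‖B - p‖^2 + β)
    (h2 : ‖A - c‖^2 = ‖B - c‖^2) :
    2 * ⟪A - B, c - p⟫ = β - α := by
  have e1 : ⟪A - B, c - p⟫ = ⟪A, c⟫ - ⟪A, p⟫ - ⟪B, c⟫ + ⟪B, p⟫ := by
    simp [inner_sub_left, inner_sub_right]; ring
  rw [norm_sub_sq_real, norm_sub_sq_real] at h1 h2
  linarith [e1, h1, h2]

lemma comb_sub {Mod : Type*} [AddCommGroup Mod] [Module ℝ Mod] {m : ℕ} (β : Fin (m+1) → ℝ)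
    (hβ : ∑ j, β j = 1) (P : Fin (m+1) → Mod) :
    (∑ j, β j • P j) - P (Fin.last m)
      = ∑ i : Fin m, β i.castSucc • (P i.castSucc - P (Fin.last m)) := by
  have h1 : P (Fin.last m) = ∑ j, β j • P (Fin.last m) := by
    rw [← Finset.sum_smul, hβ, one_smul]
  calc (∑ j, β j • P j) - P (Fin.last m)
      = ∑ j, (β j • P j - β j • P (Fin.last m)) := by
        rw [Finset.sum_sub_distrib, ← h1]
    _ = ∑ j, β j • (P j - P (Fin.last m)) := by simp_rw [smul_sub]
    _ = ∑ i : Fin m, β i.castSucc • (P i.castSucc - P (Fin.last m)) := by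
        rw [Fin.sum_univ_castSucc]; simp

set_option maxHeartbeats 4000000 in
theorem stmt4' (m : ℕ) (hm : 1 ≤ m)
    (v : Fin (m+1) → EuclideanSpace ℝ (Fin m)) (hv : AffineIndependent ℝ v)
    (η : ℝ) (hη : 0 < η) :
    ∃ ω : NNReal, 0 < ω ∧
      ∀ σ : ℝ, 0 < σ →
        ∀ (ψ : EuclideanSpace ℝ (Fin m) → ℝ) (V : Set (EuclideanSpace ℝ (Fin m))),
          IsOpen V →
          convexHull ℝ (Set.range fun j => σ • v j) ⊆ V →
          LipschitzOnWith ω ψ V →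
          ∀ w : Fin (m+1) → EuclideanSpace ℝ (Fin (m+1)),
            (∀ j, projL m (w j) = σ • v j) →
            (∀ j, w j (Fin.last m) = ψ (σ • v j)) →
            ∀ (c' : EuclideanSpace ℝ (Fin (m+1))) (r' : ℝ),
              c' ∈ affineSpan ℝ (Set.range w) →
              (∀ j, dist (w j) c' = r') →
              ∀ (c : EuclideanSpace ℝ (Fin m)) (r : ℝ),
                (∀ j, dist (σ • v j) c = r) →
                projL m '' ((affineSpan ℝ (Set.range w) : Set (EuclideanSpace ℝ (Fin (m+1)))) ∩
                    Metric.sphere c' r') ⊆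
                  Metric.thickening (σ * η) (Metric.sphere c r) := by
  -- basis machinery
  set u : Fin m → EuclideanSpace ℝ (Fin m) :=
    fun i => v i.castSucc - v (Fin.last m) with hu
  have li : LinearIndependent ℝ u := by
    have h := (affineIndependent_iff_linearIndependent_vsub ℝ v (Fin.last m)).mp hv
    have h2 := h.comp (fun i : Fin m => (⟨i.castSucc, (Fin.castSucc_lt_last i).ne⟩ :
        {x : Fin (m+1) // x ≠ Fin.last m}))
      (fun i j hij => by
        simpa [Fin.castSucc_inj] using congrArg (fun x => x.1) hij)
    exact h2
  have hcard : Fintype.card (Fin m) = Module.finrank ℝ (EuclideanSpace ℝ (Fin m)) := by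
    simp [finrank_euclideanSpace_fin]
  have : Nonempty (Fin m) := ⟨⟨0, hm⟩⟩
  let b : Module.Basis (Fin m) ℝ (EuclideanSpace ℝ (Fin m)) :=
    basisOfLinearIndependentOfCardEqFinrank li hcard
  have hb : ⇑b = u := coe_basisOfLinearIndependentOfCardEqFinrank li hcard
  let CT : EuclideanSpace ℝ (Fin m) ≃L[ℝ] (Fin m → ℝ) := b.equivFun.toContinuousLinearEquiv
  obtain ⟨K, hKdef⟩ : ∃ K : ℝ, K = ‖(CT : EuclideanSpace ℝ (Fin m) →L[ℝ] (Fin m → ℝ))‖ + 1 :=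
    ⟨_, rfl⟩
  have hK1 : 1 ≤ K := by
    have := norm_nonneg (CT : EuclideanSpace ℝ (Fin m) →L[ℝ] (Fin m → ℝ)); linarith
  have hbound : ∀ (x : EuclideanSpace ℝ (Fin m)) (i : Fin m), |b.equivFun x i| ≤ K * ‖x‖ := by
    intro x i
    have h1 : |b.equivFun x i| ≤ ‖CT x‖ := by
      have := norm_le_pi_norm (CT x) i
      simpa [Real.norm_eq_abs, CT] using this
    have h2 : ‖CT x‖ ≤ ‖(CT : EuclideanSpace ℝ (Fin m) →L[ℝ] (Fin m → ℝ))‖ * ‖x‖ :=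
      (CT : EuclideanSpace ℝ (Fin m) →L[ℝ] (Fin m → ℝ)).le_opNorm x
    nlinarith [norm_nonneg x, norm_nonneg (CT : EuclideanSpace ℝ (Fin m) →L[ℝ] (Fin m → ℝ)),
      hKdef]
  have hrecon : ∀ x : EuclideanSpace ℝ (Fin m), ∑ i, b.equivFun x i • u i = x := by
    intro x
    conv_rhs => rw [← b.equivFun.symm_apply_apply x]
    rw [Module.Basis.equivFun_symm_apply]
    simp [hb]
  have hcoord : ∀ μ : Fin m → ℝ, b.equivFun (∑ i, μ i • u i) = μ := by
    intro μ
    have h : ∑ i, μ i • u i = b.equivFun.symm μ := by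
      rw [Module.Basis.equivFun_symm_apply]; rw [hb]
    rw [h, LinearEquiv.apply_symm_apply]
  -- circumcenter of v
  let s₀ : Affine.Simplex ℝ (EuclideanSpace ℝ (Fin m)) m := ⟨v, hv⟩
  obtain ⟨c₀, hc₀def⟩ : ∃ c₀, c₀ = s₀.circumcenter := ⟨_, rfl⟩
  obtain ⟨r₀, hr₀def⟩ : ∃ r₀ : ℝ, r₀ = s₀.circumradius := ⟨_, rfl⟩
  have hc₀ : ∀ j, dist (v j) c₀ = r₀ := by
    rw [hc₀def, hr₀def]; exact fun j => s₀.dist_circumcenter_eq_circumradius j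
  have hvne : v 0 ≠ v (Fin.last m) := by
    intro h
    have h0 : (0 : Fin (m+1)) = Fin.last m := hv.injective h
    have := congrArg Fin.val h0
    simp [Fin.last] at this
    omega
  have hr₀ : 0 < r₀ := by
    have h01 : 0 < dist (v 0) (v (Fin.last m)) := dist_pos.mpr hvne
    have htr := dist_triangle (v 0) c₀ (v (Fin.last m))
    have h2 := hc₀ 0
    have h3 := hc₀ (Fin.last m)
    rw [dist_comm] at h3
    linarith
  -- the D constant
  obtain ⟨D, hDdef⟩ : ∃ D : ℝ, D = (∑ i : Fin m, ‖u i‖) + 1 := ⟨_, rfl⟩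
  have hSu0 : 0 ≤ ∑ i : Fin m, ‖u i‖ := Finset.sum_nonneg fun i _ => norm_nonneg _
  have hD1 : 1 ≤ D := by rw [hDdef]; linarith
  have hdD : ∀ i, ‖u i‖ ≤ D := by
    intro i
    have := Finset.single_le_sum (f := fun i => ‖u i‖) (fun i _ => norm_nonneg _)
      (Finset.mem_univ i)
    rw [hDdef]; linarith
  -- choose ω
  obtain ⟨W, hWdef⟩ : ∃ W : ℝ, W = min 1 (min η r₀ / (20*K*D*(r₀+1))) := ⟨_, rfl⟩
  have hKD : 0 < K*D := mul_pos (by linarith) (by linarith)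
  have h20KD : 0 < 20*K*D*(r₀+1) := by nlinarith [hKD, hr₀]
  have hWpos : 0 < W := by
    rw [hWdef]
    exact lt_min one_pos (div_pos (lt_min hη hr₀) h20KD)
  have hW1 : W ≤ 1 := by rw [hWdef]; exact min_le_left _ _
  obtain ⟨A, hAdef⟩ : ∃ A : ℝ, A = K * W * D := ⟨_, rfl⟩
  have hA0 : 0 < A := by
    rw [hAdef]; exact mul_pos (mul_pos (by linarith) hWpos) (by linarith)
  have hAle : A ≤ min η r₀ / (20*(r₀+1)) := by
    have h1 : W ≤ min η r₀ / (20*K*D*(r₀+1)) := by rw [hWdef]; exact min_le_right _ _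
    have hKne : K ≠ 0 := by linarith
    have hDne : D ≠ 0 := by linarith
    have hrne : r₀ + 1 ≠ 0 := by linarith
    have h2 : K * (min η r₀ / (20*K*D*(r₀+1))) * D = min η r₀ / (20*(r₀+1)) := by
      field_simp
    calc A = K * W * D := hAdef
      _ ≤ K * (min η r₀ / (20*K*D*(r₀+1))) * D := by
          apply mul_le_mul_of_nonneg_right _ (by linarith)
          apply mul_le_mul_of_nonneg_left h1 (by linarith)
      _ = min η r₀ / (20*(r₀+1)) := h2
  have hA20 : A ≤ 1/20 := by
    have h1 : min η r₀ ≤ r₀ := min_le_right _ _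
    have h3 : min η r₀ / (20*(r₀+1)) ≤ 1/20 := by
      rw [div_le_div_iff₀ (by positivity) (by norm_num)]
      nlinarith
    linarith
  refine ⟨Real.toNNReal W, by simpa [Real.toNNReal_pos] using hWpos, ?_⟩
  intro σ hσ ψ V hVopen hVsub hlip w hwproj hwlast c' r' hc'span hc'dist c r hcdist
  have hcoe : ((Real.toNNReal W : NNReal) : ℝ) = W := Real.coe_toNNReal W hWpos.le
  set P : Fin (m+1) → EuclideanSpace ℝ (Fin m) := fun j => σ • v j with hPdef
  have hPV : ∀ j, P j ∈ V := fun j => hVsub (subset_convexHull ℝ _ (Set.mem_range_self j))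
  set t : Fin (m+1) → ℝ := fun j => w j (Fin.last m) with ht
  have hwlast' : ∀ j, t j = ψ (P j) := fun j => hwlast j
  set a : Fin (m+1) → ℝ := fun j => t j - t (Fin.last m) with ha
  have haB : ∀ j, |a j| ≤ W * (σ * ‖v j - v (Fin.last m)‖) := by
    intro j
    have h1 := hlip.dist_le_mul _ (hPV j) _ (hPV (Fin.last m))
    have h2 : dist (P j) (P (Fin.last m)) = σ * ‖v j - v (Fin.last m)‖ := by
      rw [hPdef]
      simp only []
      rw [dist_smul₀, Real.norm_eq_abs, abs_of_pos hσ, dist_eq_norm]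
    have h3 : |a j| = dist (ψ (P j)) (ψ (P (Fin.last m))) := by
      rw [ha, Real.dist_eq]
      simp only []
      rw [hwlast' j, hwlast' (Fin.last m)]
    rw [h3]
    calc dist (ψ (P j)) (ψ (P (Fin.last m)))
        ≤ (Real.toNNReal W : ℝ) * dist (P j) (P (Fin.last m)) := h1
      _ = W * (σ * ‖v j - v (Fin.last m)‖) := by rw [hcoe, h2]
  -- identification of c and r
  have hPc₀ : ∀ j, ‖P j - σ • c₀‖ = σ * r₀ := by
    intro j
    rw [hPdef]
    simp only []
    rw [← smul_sub, norm_smul, Real.norm_eq_abs, abs_of_pos hσ, ← dist_eq_norm, hc₀ j]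
  have hPc : ∀ j, ‖P j - c‖ = r := fun j => by rw [← dist_eq_norm]; exact hcdist j
  have hsmul_diff : ∀ i : Fin m, P i.castSucc - P (Fin.last m) = σ • u i := by
    intro i
    rw [hPdef, hu]
    simp only []
    rw [smul_sub]
  have hgz : ∀ i : Fin m, ⟪u i, c - σ • c₀⟫ = 0 := by
    intro i
    have h1 : ‖P i.castSucc - σ • c₀‖^2 + 0 = ‖P (Fin.last m) - σ • c₀‖^2 + 0 := by
      rw [hPc₀, hPc₀]
    have h2 : ‖P i.castSucc - c‖^2 = ‖P (Fin.last m) - c‖^2 := by rw [hPc, hPc]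
    have h3 := key_inner _ _ _ _ _ _ h1 h2
    rw [hsmul_diff i, real_inner_smul_left] at h3
    have : σ * ⟪u i, c - σ • c₀⟫ = 0 := by linarith
    exact (mul_eq_zero.mp this).resolve_left hσ.ne'
  have hceq : c = σ • c₀ := by
    have hz : ‖c - σ • c₀‖^2 = 0 := by
      rw [← real_inner_self_eq_norm_sq]
      conv_lhs => rw [← hrecon (c - σ • c₀)]
      rw [sum_inner]
      apply Finset.sum_eq_zero
      intro i _
      rw [real_inner_smul_left, hrecon (c - σ • c₀), hgz i, mul_zero]
    have := pow_eq_zero_iff (n := 2) (by norm_num) |>.mp hz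
    rw [norm_eq_zero, sub_eq_zero] at this
    exact this
  have hr : r = σ * r₀ := by rw [← hPc 0, hceq, hPc₀ 0]
  -- barycentric representations
  have hrep : ∀ q : EuclideanSpace ℝ (Fin (m+1)), q ∈ affineSpan ℝ (Set.range w) →
      ∃ δ : Fin (m+1) → ℝ, (∑ j, δ j = 1) ∧ q = ∑ j, δ j • w j := by
    intro q hq
    obtain ⟨δ, hδ1, hδq⟩ := eq_affineCombination_of_mem_affineSpan_of_fintype hq
    refine ⟨δ, hδ1, ?_⟩
    rw [hδq, Finset.affineCombination_eq_linear_combination _ _ _ hδ1]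
  have hproj_comb : ∀ (δ : Fin (m+1) → ℝ), projL m (∑ j, δ j • w j) = ∑ j, δ j • P j := by
    intro δ
    rw [map_sum]
    refine Finset.sum_congr rfl fun j _ => ?_
    rw [LinearMap.map_smul, hwproj j]
  have hlast_comb : ∀ (δ : Fin (m+1) → ℝ), (∑ j, δ j • w j) (Fin.last m) = ∑ j, δ j * t j := by
    intro δ
    have h1 : (∑ j, δ j • w j) (Fin.last m) = lastL m (∑ j, δ j • w j) := rfl
    rw [h1, map_sum]
    refine Finset.sum_congr rfl fun j _ => ?_
    rw [LinearMap.map_smul, smul_eq_mul]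
    rfl
  obtain ⟨β, hβ1, hβc⟩ := hrep c' hc'span
  set p : EuclideanSpace ℝ (Fin m) := projL m c' with hpdef
  set sc : ℝ := c' (Fin.last m) with hscdef
  set e : ℝ := sc - t (Fin.last m) with hedef
  have keyB : ∀ (q : EuclideanSpace ℝ (Fin (m+1))) (δ : Fin (m+1) → ℝ),
      (∑ j, δ j = 1) → q = ∑ j, δ j • w j →
      |q (Fin.last m) - t (Fin.last m)| ≤ A * ‖projL m q - P (Fin.last m)‖ := by
    intro q δ hδ1 hq
    have hproj : projL m q - P (Fin.last m) = σ • ∑ i, (fun i => δ (Fin.castSucc i)) i • u i := by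
      rw [hq, hproj_comb δ, comb_sub δ hδ1 P, Finset.smul_sum]
      refine Finset.sum_congr rfl fun i _ => ?_
      rw [hsmul_diff i, smul_comm]
    have hlast : q (Fin.last m) - t (Fin.last m)
        = ∑ i : Fin m, δ (Fin.castSucc i) * a (Fin.castSucc i) := by
      have h2 := comb_sub (Mod := ℝ) δ hδ1 t
      have h2' : (∑ j, δ j * t j) - t (Fin.last m)
          = ∑ i : Fin m, δ i.castSucc * (t i.castSucc - t (Fin.last m)) := by
        simpa [smul_eq_mul] using h2
      rw [hq, hlast_comb δ, h2']
    have hcoords : ∀ i, |δ (Fin.castSucc i)| ≤ K * (σ⁻¹ * ‖projL m q - P (Fin.last m)‖) := by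
      intro i
      have hS : (∑ i, (fun i => δ (Fin.castSucc i)) i • u i)
          = σ⁻¹ • (projL m q - P (Fin.last m)) := by
        rw [hproj, inv_smul_smul₀ hσ.ne']
      have hx2 : b.equivFun (σ⁻¹ • (projL m q - P (Fin.last m))) = fun i => δ (Fin.castSucc i) := by
        rw [← hS, hcoord]
      have hb2 := hbound (σ⁻¹ • (projL m q - P (Fin.last m))) i
      rw [hx2] at hb2
      simpa [norm_smul, Real.norm_eq_abs, abs_of_pos hσ, abs_of_pos (inv_pos.mpr hσ),
        mul_assoc] using hb2
    rw [hlast]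
    have haB' : ∀ i : Fin m, |a (Fin.castSucc i)| ≤ W * (σ * ‖u i‖) := by
      intro i
      have := haB (Fin.castSucc i)
      simpa [hu] using this
    calc |∑ i : Fin m, δ (Fin.castSucc i) * a (Fin.castSucc i)|
        ≤ ∑ i : Fin m, |δ (Fin.castSucc i) * a (Fin.castSucc i)| :=
          Finset.abs_sum_le_sum_abs _ _
      _ ≤ ∑ i : Fin m, (K * (σ⁻¹ * ‖projL m q - P (Fin.last m)‖)) * (W * (σ * ‖u i‖)) := by
          refine Finset.sum_le_sum fun i _ => ?_
          rw [abs_mul]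
          exact mul_le_mul (hcoords i) (haB' i) (abs_nonneg _) (by positivity)
      _ = ∑ i : Fin m, ((K * (σ⁻¹ * ‖projL m q - P (Fin.last m)‖)) * (W * σ)) * ‖u i‖ := by
          refine Finset.sum_congr rfl fun i _ => by ring
      _ = ((K * (σ⁻¹ * ‖projL m q - P (Fin.last m)‖)) * (W * σ)) * (∑ i : Fin m, ‖u i‖) := by
          rw [← Finset.mul_sum]
      _ ≤ A * ‖projL m q - P (Fin.last m)‖ := by
          have hss : σ⁻¹ * σ = 1 := inv_mul_cancel₀ hσ.ne'
          have hSuD : (∑ i : Fin m, ‖u i‖) ≤ D := by rw [hDdef]; linarith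
          have heq : ((K * (σ⁻¹ * ‖projL m q - P (Fin.last m)‖)) * (W * σ)) * (∑ i : Fin m, ‖u i‖)
              = (σ⁻¹ * σ) * ((K * W * (∑ i : Fin m, ‖u i‖)) * ‖projL m q - P (Fin.last m)‖) := by
            ring
          rw [heq, hss, one_mul, hAdef]
          apply mul_le_mul_of_nonneg_right _ (norm_nonneg _)
          have h0 : 0 ≤ K * W := mul_nonneg (by linarith [hK1]) hWpos.le
          nlinarith only [hSuD, h0]
  have heB : |e| ≤ A * ‖p - P (Fin.last m)‖ := keyB c' β hβ1 hβc
  -- the star equations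
  have hwc : ∀ j, ‖w j - c'‖^2 = ‖P j - p‖^2 + (t j - sc)^2 := by
    intro j
    rw [pyth m (w j - c')]
    have h1 : projR (m+1) (w j - c') = P j - p := by
      have h2 : projR (m+1) (w j - c') = projL m (w j) - projL m c' := (projL m).map_sub _ _
      rw [h2, hwproj j, ← hpdef]
    have h3 : (w j - c') (Fin.last m) = t j - sc := rfl
    rw [h1, h3]
  set g : EuclideanSpace ℝ (Fin m) := c - p with hgdef
  have hstar : ∀ i : Fin m,
      2 * (σ * ⟪u i, g⟫) = (t (Fin.last m) - sc)^2 - (t i.castSucc - sc)^2 := by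
    intro i
    have hd1 : ‖w i.castSucc - c'‖ = r' := by rw [← dist_eq_norm]; exact hc'dist _
    have hd2 : ‖w (Fin.last m) - c'‖ = r' := by rw [← dist_eq_norm]; exact hc'dist _
    have h1 : ‖P i.castSucc - p‖^2 + (t i.castSucc - sc)^2
        = ‖P (Fin.last m) - p‖^2 + (t (Fin.last m) - sc)^2 := by
      rw [← hwc, ← hwc, hd1, hd2]
    have h2 : ‖P i.castSucc - c‖^2 = ‖P (Fin.last m) - c‖^2 := by rw [hPc, hPc]
    have h3 := key_inner _ _ _ _ _ _ h1 h2
    rw [hsmul_diff i, real_inner_smul_left] at h3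
    linarith
  -- the rho bound
  have hA2 : A^2 ≤ 1/400 := by nlinarith [hA20, hA0.le]
  have hρ : ‖g‖ ≤ A * |e| + σ * A^2 := by
    rcases eq_or_lt_of_le (norm_nonneg g) with h0 | h0
    · rw [← h0]
      exact add_nonneg (mul_nonneg hA0.le (abs_nonneg e)) (mul_nonneg hσ.le (sq_nonneg A))
    · have hstep1 : ⟪g, g⟫ = ∑ i, b.equivFun g i * ⟪u i, g⟫ := by
        conv_lhs => rw [← hrecon g]
        rw [sum_inner]
        refine Finset.sum_congr rfl fun i _ => ?_
        rw [real_inner_smul_left, hrecon g]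
      have e1 : σ * ‖g‖^2 = ∑ i, b.equivFun g i * (σ * ⟪u i, g⟫) := by
        rw [← real_inner_self_eq_norm_sq, hstep1, Finset.mul_sum]
        exact Finset.sum_congr rfl fun i _ => by ring
      have haB' : ∀ i : Fin m, |a (Fin.castSucc i)| ≤ W * (σ * ‖u i‖) := by
        intro i
        have := haB (Fin.castSucc i)
        simpa [hu] using this
      have habs : ∀ i : Fin m,
          |σ * ⟪u i, g⟫| ≤ |a i.castSucc| * (2*|e| + |a i.castSucc|) / 2 := by
        intro i
        have h := hstar i
        have h1 : t (Fin.last m) - sc = -e := by rw [hedef]; ring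
        have h2 : t i.castSucc - sc = a i.castSucc - e := by rw [hedef, ha]; ring
        rw [h1, h2] at h
        have h5 : σ * ⟪u i, g⟫ = a i.castSucc * (2*e - a i.castSucc) / 2 := by
          linear_combination h / 2
        rw [h5, abs_div]
        have h6 : |a i.castSucc * (2*e - a i.castSucc)|
            ≤ |a i.castSucc| * (2*|e| + |a i.castSucc|) := by
          rw [abs_mul]
          apply mul_le_mul_of_nonneg_left _ (abs_nonneg _)
          calc |2*e - a i.castSucc| ≤ |2*e| + |a i.castSucc| := abs_sub _ _
            _ = 2*|e| + |a i.castSucc| := by rw [abs_mul]; norm_num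
        have h8 : |(2:ℝ)| = 2 := by norm_num
        rw [h8]
        linarith
      have hterm : ∀ i : Fin m, |b.equivFun g i * (σ * ⟪u i, g⟫)|
          ≤ (K*‖g‖) * ((W*(σ*‖u i‖)) * (2*|e| + W*(σ*D))/2) := by
        intro i
        rw [abs_mul]
        have hb3 := hbound g i
        have haBD : |a i.castSucc| ≤ W*(σ*D) := by
          refine (haB' i).trans ?_
          nlinarith only [haB' i, mul_nonneg (mul_nonneg hWpos.le hσ.le) (sub_nonneg.mpr (hdD i))]
        have hKg : (0:ℝ) ≤ K*‖g‖ := mul_nonneg (by linarith) (norm_nonneg _)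
        calc |b.equivFun g i| * |σ * ⟪u i, g⟫|
            ≤ (K*‖g‖) * (|a i.castSucc| * (2*|e| + |a i.castSucc|)/2) := by
              apply mul_le_mul hb3 (habs i) (abs_nonneg _) hKg
          _ ≤ (K*‖g‖) * ((W*(σ*‖u i‖)) * (2*|e| + W*(σ*D))/2) := by
              apply mul_le_mul_of_nonneg_left _ hKg
              have h9 : |a i.castSucc| * (2*|e| + |a i.castSucc|)
                  ≤ (W*(σ*‖u i‖)) * (2*|e| + W*(σ*D)) :=
                mul_le_mul (haB' i) (by linarith) (by positivity)
                  (mul_nonneg hWpos.le (mul_nonneg hσ.le (norm_nonneg _)))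
              linarith
      have e2 : σ * ‖g‖^2 ≤ ∑ i : Fin m, (K*‖g‖) * ((W*(σ*‖u i‖)) * (2*|e| + W*(σ*D))/2) := by
        calc σ * ‖g‖^2 = ∑ i, b.equivFun g i * (σ * ⟪u i, g⟫) := e1
          _ ≤ |∑ i, b.equivFun g i * (σ * ⟪u i, g⟫)| := le_abs_self _
          _ ≤ ∑ i, |b.equivFun g i * (σ * ⟪u i, g⟫)| := Finset.abs_sum_le_sum_abs _ _
          _ ≤ ∑ i : Fin m, (K*‖g‖) * ((W*(σ*‖u i‖)) * (2*|e| + W*(σ*D))/2) :=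
              Finset.sum_le_sum fun i _ => hterm i
      have e3 : ∑ i : Fin m, (K*‖g‖) * ((W*(σ*‖u i‖)) * (2*|e| + W*(σ*D))/2)
          = ((K*‖g‖) * (W*σ) * (2*|e| + W*(σ*D))/2) * (∑ i : Fin m, ‖u i‖) := by
        rw [Finset.mul_sum]
        refine Finset.sum_congr rfl fun i _ => by ring
      have hSuD : (∑ i : Fin m, ‖u i‖) ≤ D := by rw [hDdef]; linarith
      have hKg : (0:ℝ) ≤ K*‖g‖ := mul_nonneg (by linarith) (norm_nonneg _)
      have hD0 : (0:ℝ) ≤ D := by linarith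
      have e4 : ((K*‖g‖) * (W*σ) * (2*|e| + W*(σ*D))/2) * (∑ i : Fin m, ‖u i‖)
          ≤ σ * (‖g‖ * (A*|e| + σ*A^2)) := by
        have hc1 : (0:ℝ) ≤ (K*‖g‖) * (W*σ) * (2*|e| + W*(σ*D))/2 := by
          apply div_nonneg _ (by norm_num)
          apply mul_nonneg (mul_nonneg hKg (mul_nonneg hWpos.le hσ.le))
          have : (0:ℝ) ≤ W*(σ*D) := mul_nonneg hWpos.le (mul_nonneg hσ.le hD0)
          linarith [abs_nonneg e]
        have step := mul_le_mul_of_nonneg_left hSuD hc1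
        have hKnn : (0:ℝ) ≤ K := by linarith
        have h2K : (0:ℝ) ≤ 2*K - 1 := by linarith
        have hq : (0:ℝ) ≤ ((σ^2 * ‖g‖) * (W*D)^2) * (K*(2*K-1)) :=
          mul_nonneg (mul_nonneg (mul_nonneg (sq_nonneg σ) (norm_nonneg g))
            (sq_nonneg (W*D))) (mul_nonneg hKnn h2K)
        rw [hAdef]
        nlinarith only [step, hq]
      have e6 : ‖g‖^2 ≤ ‖g‖ * (A*|e| + σ*A^2) := by
        have e5 : σ * ‖g‖^2 ≤ σ * (‖g‖ * (A*|e| + σ*A^2)) := by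
          rw [e3] at e2; linarith
        exact le_of_mul_le_mul_left e5 hσ
      nlinarith only [e6, h0, norm_nonneg g]
  -- relations for r'
  have hr'0 : 0 ≤ r' := by rw [← hc'dist 0]; exact dist_nonneg
  have hr'sq : r'^2 = ‖P (Fin.last m) - p‖^2 + e^2 := by
    have hd2 : ‖w (Fin.last m) - c'‖ = r' := by rw [← dist_eq_norm]; exact hc'dist _
    have h := hwc (Fin.last m)
    rw [hd2] at h
    rw [h, hedef]
    ring
  have hpPl : ‖p - P (Fin.last m)‖ ≤ σ*r₀ + ‖g‖ := by
    calc ‖p - P (Fin.last m)‖ = ‖(p - c) + (c - P (Fin.last m))‖ := by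
          rw [sub_add_sub_cancel]
      _ ≤ ‖p - c‖ + ‖c - P (Fin.last m)‖ := norm_add_le _ _
      _ = σ*r₀ + ‖g‖ := by
          have h1 : ‖p - c‖ = ‖g‖ := by rw [hgdef, norm_sub_rev]
          have h2 : ‖c - P (Fin.last m)‖ = σ*r₀ := by
            rw [norm_sub_rev, hPc (Fin.last m), hr]
          rw [h1, h2]; ring
  have hPlp : ‖P (Fin.last m) - p‖ = ‖p - P (Fin.last m)‖ := norm_sub_rev _ _
  have heB' : |e| ≤ A*(σ*r₀ + ‖g‖) :=
    heB.trans (mul_le_mul_of_nonneg_left hpPl hA0.le)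
  have hρ2 : ‖g‖ ≤ 2*σ*A^2*(r₀+1) := by
    have m1 : A*|e| ≤ A*(A*(σ*r₀ + ‖g‖)) := mul_le_mul_of_nonneg_left heB' hA0.le
    have m2 : A^2*‖g‖ ≤ (1/400)*‖g‖ := mul_le_mul_of_nonneg_right hA2 (norm_nonneg g)
    nlinarith only [hρ, m1, m2, mul_nonneg (mul_nonneg hσ.le (sq_nonneg A)) hr₀.le,
      norm_nonneg g]
  have hσr1 : (0:ℝ) ≤ σ*(r₀+1) := mul_nonneg hσ.le (by linarith)
  have heU2 : |e| ≤ 2*σ*A*(r₀+1) := by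
    have m1 : A*‖g‖ ≤ A*(2*σ*A^2*(r₀+1)) := mul_le_mul_of_nonneg_left hρ2 hA0.le
    have m2 : A^2*A ≤ (1/400)*A := mul_le_mul_of_nonneg_right hA2 hA0.le
    have m4 : 2*(σ*(r₀+1))*(A^2*A) ≤ 2*(σ*(r₀+1))*((1/400)*A) :=
      mul_le_mul_of_nonneg_left m2 (by linarith)
    have m5 : (0:ℝ) ≤ σ*A := mul_nonneg hσ.le hA0.le
    have m6 : (0:ℝ) ≤ σ*A*r₀ := mul_nonneg m5 hr₀.le
    nlinarith only [heB', m1, m4, m5, m6]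
  -- now take an arbitrary point of the circumsphere
  intro yy hyy
  obtain ⟨x, hx, rfl⟩ := hyy
  obtain ⟨hxspan, hxsph⟩ := hx
  obtain ⟨γ, hγ1, hγx⟩ := hrep x hxspan
  set y : EuclideanSpace ℝ (Fin m) := projL m x with hydef
  set z : ℝ := x (Fin.last m) - t (Fin.last m) with hzdef
  have hzB : |z| ≤ A * ‖y - P (Fin.last m)‖ := keyB x γ hγ1 hγx
  have hxd : ‖x - c'‖ = r' := by rw [← dist_eq_norm]; exact Metric.mem_sphere.mp hxsph
  have hxsq : r'^2 = ‖y - p‖^2 + (z - e)^2 := by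
    rw [← hxd, pyth m (x - c')]
    have h1 : projR (m+1) (x - c') = y - p := by
      have h2 : projR (m+1) (x - c') = projL m x - projL m c' := (projL m).map_sub _ _
      rw [h2, ← hydef, ← hpdef]
    have h3 : (x - c') (Fin.last m) = z - e := by
      have h4 : (x - c') (Fin.last m) = x (Fin.last m) - sc := rfl
      rw [h4, hzdef, hedef]; ring
    rw [h1, h3]
  have hn2u : ‖y - p‖ ≤ r' := by
    nlinarith only [hxsq, sq_nonneg (z - e), norm_nonneg (y - p), hr'0]
  have habsze : (z - e)^2 ≤ (|z| + |e|)^2 := by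
    have h1 : |z - e| ≤ |z| + |e| := abs_sub _ _
    calc (z-e)^2 = |z-e|^2 := (sq_abs _).symm
      _ ≤ (|z| + |e|)^2 := by nlinarith only [h1, abs_nonneg (z-e), abs_nonneg z, abs_nonneg e]
  have hn2l : r' - (|z| + |e|) ≤ ‖y - p‖ := by
    nlinarith only [hxsq, habsze, norm_nonneg (y - p), hr'0, abs_nonneg z, abs_nonneg e,
      sq_nonneg (r' - (|z| + |e|) - ‖y - p‖), sq_nonneg (r' - (|z| + |e|))]
  have hr'u : r' ≤ ‖P (Fin.last m) - p‖ + |e| := by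
    nlinarith only [hr'sq, sq_abs e, abs_nonneg e, norm_nonneg (P (Fin.last m) - p), hr'0]
  have hn1r' : ‖P (Fin.last m) - p‖ ≤ r' := by
    nlinarith only [hr'sq, sq_nonneg e, norm_nonneg (P (Fin.last m) - p), hr'0]
  have hn1u : ‖P (Fin.last m) - p‖ ≤ σ*r₀ + ‖g‖ := by rw [hPlp]; exact hpPl
  have hn1l : σ*r₀ - ‖g‖ ≤ ‖P (Fin.last m) - p‖ := by
    have h1 : ‖P (Fin.last m) - c‖ ≤ ‖P (Fin.last m) - p‖ + ‖p - c‖ := by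
      calc ‖P (Fin.last m) - c‖ = ‖(P (Fin.last m) - p) + (p - c)‖ := by
            rw [sub_add_sub_cancel]
        _ ≤ _ := norm_add_le _ _
    have h2 : ‖p - c‖ = ‖g‖ := by rw [hgdef, norm_sub_rev]
    have h3 := hPc (Fin.last m)
    rw [hr] at h3
    rw [h2] at h1
    rw [h3] at h1
    linarith
  have hyPl : ‖y - P (Fin.last m)‖ ≤ ‖y - p‖ + ‖P (Fin.last m) - p‖ := by
    calc ‖y - P (Fin.last m)‖ = ‖(y - p) - (P (Fin.last m) - p)‖ := by
          rw [sub_sub_sub_cancel_right]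
      _ ≤ ‖y - p‖ + ‖P (Fin.last m) - p‖ := norm_sub_le _ _
  have hn3u : ‖y - c‖ ≤ ‖y - p‖ + ‖g‖ := by
    calc ‖y - c‖ = ‖(y - p) - (c - p)‖ := by rw [sub_sub_sub_cancel_right]
      _ ≤ ‖y - p‖ + ‖c - p‖ := norm_sub_le _ _
      _ = ‖y - p‖ + ‖g‖ := by rw [hgdef]
  have hn3l : ‖y - p‖ - ‖g‖ ≤ ‖y - c‖ := by
    have h1 : ‖y - p‖ ≤ ‖y - c‖ + ‖c - p‖ := by
      calc ‖y - p‖ = ‖(y - c) + (c - p)‖ := by rw [sub_add_sub_cancel]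
        _ ≤ _ := norm_add_le _ _
    have h2 : ‖c - p‖ = ‖g‖ := by rw [hgdef]
    linarith
  have hZ2 : |z| ≤ 3*σ*A*(r₀+1) := by
    have m1 : ‖y - P (Fin.last m)‖ ≤ 2*(σ*r₀) + 2*‖g‖ + |e| := by
      linarith only [hyPl, hn2u, hr'u, hn1u]
    have m2 : |z| ≤ A*(2*(σ*r₀) + 2*‖g‖ + |e|) :=
      hzB.trans (mul_le_mul_of_nonneg_left m1 hA0.le)
    have m3 : A*‖g‖ ≤ A*(2*σ*A^2*(r₀+1)) := mul_le_mul_of_nonneg_left hρ2 hA0.le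
    have m4 : A*|e| ≤ A*(2*σ*A*(r₀+1)) := mul_le_mul_of_nonneg_left heU2 hA0.le
    have m5 : A^2*A ≤ (1/400)*A := mul_le_mul_of_nonneg_right hA2 hA0.le
    have m6 : 2*(σ*(r₀+1))*(A^2*A) ≤ 2*(σ*(r₀+1))*((1/400)*A) :=
      mul_le_mul_of_nonneg_left m5 (by linarith)
    have m7 : A*A ≤ (1/20)*A := mul_le_mul_of_nonneg_right hA20 hA0.le
    have m8 : 2*(σ*(r₀+1))*(A*A) ≤ 2*(σ*(r₀+1))*((1/20)*A) :=
      mul_le_mul_of_nonneg_left m7 (by linarith)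
    have m9 : (0:ℝ) ≤ σ*A := mul_nonneg hσ.le hA0.le
    have m10 : (0:ℝ) ≤ σ*A*r₀ := mul_nonneg m9 hr₀.le
    nlinarith only [m2, m3, m4, m6, m8, m9, m10]
  have hsum : 2*‖g‖ + |e| + |z| ≤ 9*σ*A*(r₀+1) := by
    have m7 : A*A ≤ (1/20)*A := mul_le_mul_of_nonneg_right hA20 hA0.le
    have m8 : 2*(σ*(r₀+1))*(A*A) ≤ 2*(σ*(r₀+1))*((1/20)*A) :=
      mul_le_mul_of_nonneg_left m7 (by linarith)
    nlinarith only [hρ2, heU2, hZ2, m8, mul_nonneg hσr1 hA0.le]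
  have hmin : 0 < min η r₀ := lt_min hη hr₀
  have hfin : 2*‖g‖ + |e| + |z| < σ * (min η r₀) / 2 := by
    have h20 : (0:ℝ) < 20*(r₀+1) := by linarith
    have m0 : A*(20*(r₀+1)) ≤ min η r₀ := (le_div_iff₀ h20).mp hAle
    have m1 : 9*A*(r₀+1) ≤ (9/20)*(min η r₀) := by linarith only [m0]
    have m2 : 9*σ*A*(r₀+1) < σ * (min η r₀)/2 := by nlinarith only [m1, hσ, hmin]
    linarith only [hsum, m2]
  have hn3u' : ‖y - c‖ ≤ σ*r₀ + (2*‖g‖ + |e| + |z|) := by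
    linarith only [hn3u, hn2u, hr'u, hn1u, abs_nonneg z]
  have hn3l' : σ*r₀ - (2*‖g‖ + |e| + |z|) ≤ ‖y - c‖ := by
    linarith only [hn3l, hn2l, hn1r', hn1l]
  have hminr : σ*(min η r₀)/2 ≤ σ*r₀/2 := by nlinarith only [min_le_right η r₀, hσ]
  have hminη : σ*(min η r₀)/2 ≤ σ*η/2 := by nlinarith only [min_le_left η r₀, hσ]
  have hn3pos : 0 < ‖y - c‖ := by nlinarith only [hn3l', hfin, hminr, hσ, hr₀]
  rw [Metric.mem_thickening_iff]
  refine ⟨c + ((σ*r₀)/‖y - c‖) • (y - c), ?_, ?_⟩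
  · rw [Metric.mem_sphere, dist_eq_norm, add_sub_cancel_left, norm_smul, Real.norm_eq_abs,
      abs_of_nonneg (div_nonneg (mul_nonneg hσ.le hr₀.le) (norm_nonneg _)),
      div_mul_cancel₀ _ hn3pos.ne', hr]
  · rw [dist_eq_norm]
    have heq : y - (c + ((σ*r₀)/‖y - c‖) • (y - c))
        = (1 - (σ*r₀)/‖y - c‖) • (y - c) := by
      rw [sub_smul, one_smul]
      abel
    rw [heq, norm_smul, Real.norm_eq_abs]
    have hfs : (1 - (σ*r₀)/‖y - c‖) * ‖y - c‖ = ‖y - c‖ - σ*r₀ := by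
      field_simp
    have habs1 : |1 - (σ*r₀)/‖y - c‖| * ‖y - c‖ = |‖y - c‖ - σ*r₀| := by
      calc |1 - (σ*r₀)/‖y - c‖| * ‖y - c‖
          = |1 - (σ*r₀)/‖y - c‖| * |‖y - c‖| := by rw [abs_of_pos hn3pos]
        _ = |(1 - (σ*r₀)/‖y - c‖) * ‖y - c‖| := (abs_mul _ _).symm
        _ = |‖y - c‖ - σ*r₀| := by rw [hfs]
    rw [habs1]
    have hb : |‖y - c‖ - σ*r₀| ≤ 2*‖g‖ + |e| + |z| :=
      abs_le.mpr ⟨by linarith, by linarith⟩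
    have hση : 0 < σ*η := mul_pos hσ hη
    linarith only [hb, hfin, hminη, hση]

theorem stmt4 (M : ℕ) (hM : 2 ≤ M)
    (v : Fin M → EuclideanSpace ℝ (Fin (M - 1))) (hv : AffineIndependent ℝ v)
    (η : ℝ) (hη : 0 < η) :
    ∃ ω : NNReal, 0 < ω ∧
      ∀ σ : ℝ, 0 < σ →
        ∀ (ψ : EuclideanSpace ℝ (Fin (M - 1)) → ℝ) (V : Set (EuclideanSpace ℝ (Fin (M - 1)))),
          IsOpen V →
          convexHull ℝ (Set.range fun j => σ • v j) ⊆ V →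
          LipschitzOnWith ω ψ V →
          ∀ w : Fin M → EuclideanSpace ℝ (Fin M),
            (∀ j, projR M (w j) = σ • v j) →
            (∀ j, w j ⟨M - 1, by omega⟩ = ψ (σ • v j)) →
            ∀ (c' : EuclideanSpace ℝ (Fin M)) (r' : ℝ),
              c' ∈ affineSpan ℝ (Set.range w) →
              (∀ j, dist (w j) c' = r') →
              ∀ (c : EuclideanSpace ℝ (Fin (M - 1))) (r : ℝ),
                (∀ j, dist (σ • v j) c = r) →
                projR M '' ((affineSpan ℝ (Set.range w) : Set (EuclideanSpace ℝ (Fin M))) ∩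
                    Metric.sphere c' r') ⊆
                  Metric.thickening (σ * η) (Metric.sphere c r) := by
  obtain ⟨m, rfl⟩ : ∃ m, M = m + 1 := ⟨M - 1, by omega⟩
  exact stmt4' m (by omega) v hv η hη
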